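/- Let K be a finite field of odd characteristic and d, d' two nondegenerate symmetric bilinear forms of the same dimension n over K. Then d and d' are isometric if and only if their discriminants det(D), det(D') agree modulo squares (K^×)². -/

import Mathlib

open Matrix Polynomial in
lemma aux_rep {K : Type*} [Field K] [Fintype K] (hchar : ringChar K ≠ 2)
    (a b t : K) (ha : a ≠ 0) (hb : b ≠ 0) : ∃ x y : K, a * x ^ 2 + b * y ^ 2 = t := by
  obtain ⟨x, y, h⟩ := FiniteField.exists_root_sum_quadratic
    (f := C a * X ^ 2 - C t) (g := C b * X ^ 2)
    (by rw [degree_sub_C (by rw [degree_C_mul_X_pow _ ha]; decide)]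
        rw [degree_C_mul_X_pow _ ha]; rfl)
    (by rw [degree_C_mul_X_pow _ hb]; rfl) (FiniteField.odd_card_of_char_ne_two hchar)
  simp only [Polynomial.eval_sub, Polynomial.eval_mul, Polynomial.eval_pow, Polynomial.eval_C,
    Polynomial.eval_X] at h
  exact ⟨x, y, by linear_combination h⟩

open Matrix in
lemma diag2 {K : Type*} [Semiring K] (a b : K) : diagonal ![a, b] = !![a, 0; 0, b] := by
  ext i j; fin_cases i <;> fin_cases j <;> simp

open Matrix in
lemma aux_two {K : Type*} [Field K] [Fintype K] (hchar : ringChar K ≠ 2)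
    (a b t : K) (ha : a ≠ 0) (hb : b ≠ 0) (ht : t ≠ 0) :
    ∃ A : Matrix (Fin 2) (Fin 2) K, IsUnit A.det ∧
      A * diagonal ![a, b] * Aᵀ = diagonal ![t, a * b * t] := by
  obtain ⟨x, y, hxy⟩ := aux_rep hchar a b t ha hb
  refine ⟨!![x, y; -b * y, a * x], ?_, ?_⟩
  · rw [Matrix.det_fin_two_of]
    have : x * (a * x) - y * (-b * y) = t := by linear_combination hxy
    rw [this]; exact ht.isUnit
  · rw [diag2, diag2, show (!![x, y; -b * y, a * x])ᵀ = !![x, -b*y; y, a*x] by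
      ext i j; fin_cases i <;> fin_cases j <;> simp]
    rw [Matrix.mul_fin_two, Matrix.mul_fin_two]
    ext i j
    fin_cases i <;> fin_cases j <;> simp <;>
      first
        | linear_combination hxy
        | linear_combination a * b * hxy
        | ring

open Matrix in
lemma aux_cons1 {K : Type*} (n : ℕ) (a : K) (p : Fin n → K) :
    Sum.elim (fun _ : Fin 1 => a) p ∘ (finSumFinEquiv.trans (finCongr (Nat.add_comm 1 n))).symm
      = Fin.cons a p := by
  set e := finSumFinEquiv.trans (finCongr (Nat.add_comm 1 n)) with he
  funext m
  obtain ⟨z, rfl⟩ := e.surjective m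
  rw [Function.comp_apply, Equiv.symm_apply_apply]
  cases z with
  | inl i =>
    have h0 : e (Sum.inl i) = 0 := by
      apply Fin.ext
      simp [he, Fin.val_eq_zero i]
    rw [h0]; simp
  | inr i =>
    have h0 : e (Sum.inr i) = i.succ := by
      apply Fin.ext
      simp [he, Nat.add_comm]
    rw [h0]; simp

open Matrix in
lemma aux_cons2 {K : Type*} (n : ℕ) (a b : K) (p : Fin n → K) :
    Sum.elim ![a, b] p ∘ (finSumFinEquiv.trans (finCongr (Nat.add_comm 2 n))).symm
      = Fin.cons a (Fin.cons b p) := by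
  set e := finSumFinEquiv.trans (finCongr (Nat.add_comm 2 n)) with he
  funext m
  obtain ⟨z, rfl⟩ := e.surjective m
  rw [Function.comp_apply, Equiv.symm_apply_apply]
  cases z with
  | inl i =>
    match i with
    | 0 =>
      have h0 : e (Sum.inl 0) = 0 := by apply Fin.ext; simp [he]
      rw [h0]; simp
    | 1 =>
      have h0 : e (Sum.inl 1) = 1 := by apply Fin.ext; simp [he]
      rw [h0]
      have h1 : (1 : Fin (n + 2)) = Fin.succ 0 := rfl
      rw [h1, Fin.cons_succ, Fin.cons_zero]
      simp
  | inr i =>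
    have h0 : e (Sum.inr i) = i.succ.succ := by
      apply Fin.ext
      simp [he]
    rw [h0]; simp

open Matrix in
lemma aux_block {K : Type*} [Field K] {ι κ μ : Type*} [Fintype ι] [Fintype κ] [Fintype μ]
    [DecidableEq ι] [DecidableEq κ] [DecidableEq μ]
    {A₁ : Matrix ι ι K} {A₂ : Matrix κ κ K} (h₁ : IsUnit A₁.det) (h₂ : IsUnit A₂.det)
    {p q : ι → K} {r s : κ → K} (e : ι ⊕ κ ≃ μ)
    (hpq : A₁ * diagonal p * A₁ᵀ = diagonal q) (hrs : A₂ * diagonal r * A₂ᵀ = diagonal s) :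
    ∃ B : Matrix μ μ K, IsUnit B.det ∧
      B * diagonal (Sum.elim p r ∘ e.symm) * Bᵀ = diagonal (Sum.elim q s ∘ e.symm) := by
  refine ⟨(fromBlocks A₁ 0 0 A₂).submatrix e.symm e.symm, ?_, ?_⟩
  · rw [Matrix.det_submatrix_equiv_self, Matrix.det_fromBlocks_zero₁₂]
    exact h₁.mul h₂
  · rw [← Matrix.submatrix_diagonal_equiv, Matrix.transpose_submatrix,
      Matrix.submatrix_mul_equiv, Matrix.submatrix_mul_equiv, ← Matrix.submatrix_diagonal_equiv,
      ← Matrix.fromBlocks_diagonal, ← Matrix.fromBlocks_diagonal,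
      Matrix.fromBlocks_transpose, Matrix.fromBlocks_multiply, Matrix.fromBlocks_multiply]
    simp [hpq, hrs]

open Matrix LinearMap in
lemma aux_diagonalize {K : Type*} [Field K] (hchar : ringChar K ≠ 2) {n : ℕ}
    (D : Matrix (Fin n) (Fin n) K) (hD : D.IsSymm) :
    ∃ (P : Matrix (Fin n) (Fin n) K) (g : Fin n → K),
      IsUnit P.det ∧ P * D * Pᵀ = Matrix.diagonal g := by
  haveI : Invertible (2 : K) := invertibleOfNonzero (Ring.two_ne_zero hchar)
  set B := Matrix.toBilin' D with hB
  have hBsymm : B.IsSymm := by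
    rw [LinearMap.BilinForm.isSymm_def]
    intro x y
    simp only [RingHom.id_apply, hB, Matrix.toBilin'_apply]
    rw [Finset.sum_comm]
    refine Finset.sum_congr rfl fun i _ => Finset.sum_congr rfl fun j _ => ?_
    rw [hD.apply i j]
    ring
  obtain ⟨v₀, hv₀⟩ := LinearMap.BilinForm.exists_orthogonal_basis (LinearMap.BilinForm.isSymm_iff.mp hBsymm)
  have hrank : Module.finrank K (Fin n → K) = n := Module.finrank_fin_fun K
  set v : Module.Basis (Fin n) K (Fin n → K) := v₀.reindex (finCongr hrank) with hv
  have hvOrtho : ∀ i j : Fin n, i ≠ j → B (v i) (v j) = 0 := by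
    intro i j hij
    rw [hv, Module.Basis.reindex_apply, Module.Basis.reindex_apply]
    exact (LinearMap.isOrthoᵢ_def.mp hv₀) _ _ (fun h => hij (by simpa using congrArg (finCongr hrank) h))
  set b : Module.Basis (Fin n) K (Fin n → K) := Pi.basisFun K (Fin n) with hb
  have key := BilinForm.toMatrix_mul_basis_toMatrix b v B
  have hDmat : LinearMap.BilinForm.toMatrix b B = D := by
    rw [hb, BilinForm.toMatrix_basisFun, hB, BilinForm.toMatrix'_toBilin']
  have hdiag : LinearMap.BilinForm.toMatrix v B = Matrix.diagonal (fun i => B (v i) (v i)) := by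
    ext i j
    rw [BilinForm.toMatrix_apply]
    rcases eq_or_ne i j with rfl | hij
    · simp
    · rw [Matrix.diagonal_apply_ne _ hij]
      exact hvOrtho i j hij
  haveI := b.invertibleToMatrix v
  refine ⟨(b.toMatrix v)ᵀ, fun i => B (v i) (v i), ?_, ?_⟩
  · rw [Matrix.det_transpose]
    exact Matrix.isUnit_det_of_invertible _
  · rw [Matrix.transpose_transpose, ← hDmat, key, hdiag]

open Matrix in
lemma aux_diag_cong {K : Type*} [Field K] [Fintype K] (hchar : ringChar K ≠ 2) :
    ∀ (n : ℕ) (d e : Fin n → K), (∀ i, d i ≠ 0) → (∀ i, e i ≠ 0) →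
      (∃ c : K, c ≠ 0 ∧ ∏ i, d i = c ^ 2 * ∏ i, e i) →
      ∃ A : Matrix (Fin n) (Fin n) K, IsUnit A.det ∧ A * diagonal e * Aᵀ = diagonal d := by
  intro n
  induction n with
  | zero =>
    intro d e _ _ _
    exact ⟨1, by simp, by rw [transpose_one, mul_one, one_mul, Subsingleton.elim e d]⟩
  | succ n ih =>
    match n with
    | 0 =>
      intro d e hd he ⟨c, hc, hprod⟩
      rw [Fin.prod_univ_one, Fin.prod_univ_one] at hprod
      refine ⟨diagonal (fun _ => c), ?_, ?_⟩
      · rw [det_diagonal, Fin.prod_univ_one]; exact hc.isUnit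
      · have hfun : (fun i => c * e i * c) = d := by
          funext i
          have h1 : i = 0 := Fin.ext (by omega)
          rw [h1, hprod]
          ring
        rw [diagonal_transpose, diagonal_mul_diagonal, diagonal_mul_diagonal, hfun]
    | m + 1 =>
      intro d e hd he ⟨c, hc, hprod⟩
      set a := e 0 with ha
      set b := e 1 with hb
      set t := d 0 with ht
      set r : Fin m → K := fun i => e i.succ.succ with hr
      have he2 : e = Fin.cons a (Fin.cons b r) := by
        funext i
        refine Fin.cases rfl (fun j => ?_) i
        refine Fin.cases ?_ (fun k => ?_) j
        · rw [Fin.cons_succ, Fin.cons_zero]; rfl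
        · rw [Fin.cons_succ, Fin.cons_succ]
      obtain ⟨A₂, hA₂u, hA₂⟩ := aux_two hchar a b t (he 0) (he 1) (hd 0)
      -- step 1 : diagonal e ≅ diagonal (cons t (cons (a*b*t) r))
      have hid : ∀ k : ℕ, ∀ f : Fin k → K, (1 : Matrix (Fin k) (Fin k) K) * diagonal f *
          (1 : Matrix (Fin k) (Fin k) K)ᵀ = diagonal f := by
        intro k f; rw [transpose_one, one_mul, mul_one]
      obtain ⟨B, hBu, hB⟩ := aux_block hA₂u (by simp : IsUnit (1 : Matrix (Fin m) (Fin m) K).det)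
        (finSumFinEquiv.trans (finCongr (Nat.add_comm 2 m))) hA₂ (hid m r)
      rw [aux_cons2, aux_cons2] at hB
      -- products
      have hPe : ∏ i, e i = a * (b * ∏ i, r i) := by rw [he2, Fin.prod_cons, Fin.prod_cons]
      have hPd : ∏ i, d i = t * ∏ i, Fin.tail d i := Fin.prod_univ_succ d
      have habt : a * b * t ≠ 0 := mul_ne_zero (mul_ne_zero (he 0) (he 1)) (hd 0)
      have htne : t ≠ 0 := hd 0
      have hc' : ∏ i, Fin.tail d i = (c / t) ^ 2 * ∏ i, Fin.cons (a * b * t) r i := by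
        rw [Fin.prod_cons]
        rw [hPd, hPe] at hprod
        field_simp
        linear_combination hprod
      obtain ⟨A₁, hA₁u, hA₁⟩ := ih (Fin.tail d) (Fin.cons (a * b * t) r)
        (fun i => hd i.succ)
        (fun i => Fin.cases habt (fun k => he k.succ.succ) i)
        ⟨c / t, div_ne_zero hc (hd 0), hc'⟩
      obtain ⟨C, hCu, hC⟩ := aux_block
        (by simp : IsUnit (1 : Matrix (Fin 1) (Fin 1) K).det) hA₁u
        (finSumFinEquiv.trans (finCongr (Nat.add_comm 1 (m + 1))))
        (hid 1 (fun _ => t)) hA₁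
      rw [aux_cons1, aux_cons1] at hC
      rw [ht, Fin.cons_self_tail] at hC
      refine ⟨C * B, by rw [Matrix.det_mul]; exact hCu.mul hBu, ?_⟩
      calc C * B * diagonal e * (C * B)ᵀ
          = C * (B * diagonal (Fin.cons a (Fin.cons b r)) * Bᵀ) * Cᵀ := by
            rw [transpose_mul, he2]; simp only [Matrix.mul_assoc]
        _ = C * diagonal (Fin.cons t (Fin.cons (a * b * t) r)) * Cᵀ := by rw [hB]
        _ = diagonal d := hC


open Matrix in
lemma aux_trans {K : Type*} [CommRing K] {n : ℕ} {A₁ A₂ X Y Z : Matrix (Fin n) (Fin n) K}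
    (h1 : A₁ * X * A₁ᵀ = Y) (h2 : A₂ * Y * A₂ᵀ = Z) :
    (A₂ * A₁) * X * (A₂ * A₁)ᵀ = Z := by
  rw [transpose_mul, ← h2, ← h1]
  simp only [Matrix.mul_assoc]

open Matrix in
lemma aux_symm {K : Type*} [Field K] {n : ℕ} {A X Y : Matrix (Fin n) (Fin n) K}
    (hu : IsUnit A.det) (h : A * X * Aᵀ = Y) : A⁻¹ * Y * (A⁻¹)ᵀ = X := by
  have hAT : IsUnit (Aᵀ).det := by rwa [Matrix.det_transpose]
  rw [← h, Matrix.transpose_nonsing_inv]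
  calc A⁻¹ * (A * X * Aᵀ) * (Aᵀ)⁻¹
      = (A⁻¹ * A) * (X * (Aᵀ * (Aᵀ)⁻¹)) := by simp only [Matrix.mul_assoc]
    _ = X := by
        rw [Matrix.nonsing_inv_mul _ hu, Matrix.mul_nonsing_inv _ hAT, one_mul, mul_one]

/-- Two nondegenerate symmetric bilinear forms of the same dimension over a finite field of
odd characteristic are isometric iff their discriminants agree modulo squares. -/
theorem stmt_15 {K : Type*} [Field K] [Fintype K] (hchar : ringChar K ≠ 2)
    {n : ℕ} (D D' : Matrix (Fin n) (Fin n) K)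
    (hD : D.IsSymm) (hD' : D'.IsSymm) (hDdet : IsUnit D.det) (hD'det : IsUnit D'.det) :
    (∃ A : Matrix (Fin n) (Fin n) K, IsUnit A.det ∧ A * D' * A.transpose = D) ↔
      ∃ c : K, c ≠ 0 ∧ D.det = c ^ 2 * D'.det := by
  constructor
  · rintro ⟨A, hAu, hA⟩
    refine ⟨A.det, hAu.ne_zero, ?_⟩
    rw [← hA, Matrix.det_mul, Matrix.det_mul, Matrix.det_transpose]
    ring
  · rintro ⟨c, hc, hdet⟩
    obtain ⟨P, g, hPu, hP⟩ := aux_diagonalize hchar D hD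
    obtain ⟨Q, g', hQu, hQ⟩ := aux_diagonalize hchar D' hD'
    have hg : ∏ i, g i = P.det ^ 2 * D.det := by
      rw [← Matrix.det_diagonal, ← hP, Matrix.det_mul, Matrix.det_mul, Matrix.det_transpose]
      ring
    have hg' : ∏ i, g' i = Q.det ^ 2 * D'.det := by
      rw [← Matrix.det_diagonal, ← hQ, Matrix.det_mul, Matrix.det_mul, Matrix.det_transpose]
      ring
    have hgne : ∀ i, g i ≠ 0 := by
      have : ∏ i, g i ≠ 0 := by
        rw [hg]; exact mul_ne_zero (pow_ne_zero _ hPu.ne_zero) hDdet.ne_zero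
      intro i
      exact Finset.prod_ne_zero_iff.mp this i (Finset.mem_univ i)
    have hg'ne : ∀ i, g' i ≠ 0 := by
      have : ∏ i, g' i ≠ 0 := by
        rw [hg']; exact mul_ne_zero (pow_ne_zero _ hQu.ne_zero) hD'det.ne_zero
      intro i
      exact Finset.prod_ne_zero_iff.mp this i (Finset.mem_univ i)
    obtain ⟨A₀, hA₀u, hA₀⟩ := aux_diag_cong hchar n g g' hgne hg'ne
      ⟨P.det * c / Q.det, by
        exact div_ne_zero (mul_ne_zero hPu.ne_zero hc) hQu.ne_zero, by
        rw [hg, hg', hdet]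
        rw [div_pow, div_mul_eq_mul_div, eq_div_iff (pow_ne_zero 2 hQu.ne_zero)]
        ring⟩
    refine ⟨P⁻¹ * (A₀ * Q), ?_, ?_⟩
    · rw [Matrix.det_mul, Matrix.det_mul]
      exact ((P.isUnit_nonsing_inv_det hPu).mul (hA₀u.mul hQu))
    · exact aux_trans (aux_trans hQ hA₀) (aux_symm hPu hP)
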